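/- Let 𝐂 be a full semi-AFL. Let M be a finitely generated monoid and let N ≤ M be a submonoid such that M \ N is an ideal of M and M \ N is finite. Then M is 𝐂^∃-flat (as a monoid) if and only if N is 𝐂^∃-flat (as a monoid). -/

import Mathlib

/-!  Common framework: classes of languages over finite alphabets, `C^∀`- and
`C^∃`-subsets of finitely generated monoids and groups, closure properties
(cone, full semi-AFL), and `C^•`-flatness.  -/

/-- A class of languages: for each finite alphabet `Fin n`, a collection of languages over it. -/
abbrev LangClass : Type := ∀ n : ℕ, Set (Set (List (Fin n)))

/-- `π` is a surjective monoid homomorphism from the free monoid on `Fin n`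
(words, under concatenation) onto `M`; i.e. it presents `M` as a monoid generated
by the finite set `Fin n`. -/
structure FreeHomOnto {n : ℕ} (M : Type) [Monoid M] (π : List (Fin n) → M) : Prop where
  map_nil : π [] = 1
  map_append : ∀ u v : List (Fin n), π (u ++ v) = π u * π v
  surjective : Function.Surjective π

/-- `X ⊆ M` is a `C^∀`-subset of `M` w.r.t. the generating map `π`:
the full preimage `π⁻¹(X)` is a language of the class `C`. -/
def CForall (C : LangClass) {n : ℕ} {M : Type} [Monoid M]
    (π : List (Fin n) → M) (X : Set M) : Prop :=
  {w : List (Fin n) | π w ∈ X} ∈ C n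

/-- `X ⊆ M` is a `C^∃`-subset of `M` w.r.t. the generating map `π`:
some language of the class `C` is mapped onto `X` by `π`. -/
def CExists (C : LangClass) {n : ℕ} {M : Type} [Monoid M]
    (π : List (Fin n) → M) (X : Set M) : Prop :=
  ∃ L ∈ C n, π '' L = X

/-- Closure under inverse images of homomorphisms of free monoids on finite alphabets.
Such a homomorphism is determined by its values `f i` on letters, sending `w` to `w.flatMap f`. -/
def ClosedUnderInvHom (C : LangClass) : Prop :=
  ∀ (m n : ℕ) (f : Fin m → List (Fin n)), ∀ L ∈ C n,
    {w : List (Fin m) | w.flatMap f ∈ L} ∈ C m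

/-- Closure under images of homomorphisms of free monoids on finite alphabets. -/
def ClosedUnderHom (C : LangClass) : Prop :=
  ∀ (m n : ℕ) (f : Fin m → List (Fin n)), ∀ L ∈ C m,
    (fun w : List (Fin m) => w.flatMap f) '' L ∈ C n

/-- A language over `Fin n` is regular if it is accepted by a DFA with finitely many states. -/
def IsRegularLang {n : ℕ} (L : Set (List (Fin n))) : Prop :=
  ∃ (σ : Type) (_ : Fintype σ) (A : DFA (Fin n) σ), ∀ w : List (Fin n), w ∈ A.accepts ↔ w ∈ L

/-- Closure under intersection with regular languages. -/
def ClosedUnderInterReg (C : LangClass) : Prop :=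
  ∀ (n : ℕ), ∀ L ∈ C n, ∀ R : Set (List (Fin n)), IsRegularLang R → L ∩ R ∈ C n

/-- Closure under (binary) union. -/
def ClosedUnderUnion (C : LangClass) : Prop :=
  ∀ (n : ℕ), ∀ L₁ ∈ C n, ∀ L₂ ∈ C n, L₁ ∪ L₂ ∈ C n

/-- A cone: a class of languages closed under homomorphisms, inverse homomorphisms,
and intersection with regular languages. -/
def IsCone (C : LangClass) : Prop :=
  ClosedUnderHom C ∧ ClosedUnderInvHom C ∧ ClosedUnderInterReg C

/-- A full semi-AFL: a cone closed under union. -/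
def IsFullSemiAFL (C : LangClass) : Prop :=
  IsCone C ∧ ClosedUnderUnion C

/-- `G` is `C^∀`-flat as a group: for every finitely generated subgroup `H ≤ G`
(presented by a finite monoid generating map `ρ`), a subset of `H` is a `C^∀`-subset
of `G` iff it is a `C^∀`-subset of `H`; i.e. `C^∀(G | H) = C^∀(H)`. -/
def GroupCForallFlat (C : LangClass) (G : Type) [Group G] : Prop :=
  ∀ (H : Subgroup G) (n k : ℕ) (π : List (Fin n) → G) (ρ : List (Fin k) → ↥H),
    FreeHomOnto G π → FreeHomOnto (↥H) ρ →
      ∀ X : Set G, X ⊆ (H : Set G) →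
        (CForall C π X ↔ CForall C ρ (Subtype.val ⁻¹' X))

/-- `G` is `C^∃`-flat as a group: for every finitely generated subgroup `H ≤ G`,
a subset of `H` is a `C^∃`-subset of `G` iff it is a `C^∃`-subset of `H`;
i.e. `C^∃(G | H) = C^∃(H)`. -/
def GroupCExistsFlat (C : LangClass) (G : Type) [Group G] : Prop :=
  ∀ (H : Subgroup G) (n k : ℕ) (π : List (Fin n) → G) (ρ : List (Fin k) → ↥H),
    FreeHomOnto G π → FreeHomOnto (↥H) ρ →
      ∀ X : Set G, X ⊆ (H : Set G) →
        (CExists C π X ↔ CExists C ρ (Subtype.val ⁻¹' X))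

/-- `M` is `C^∀`-flat as a monoid: for every finitely generated submonoid `N ≤ M`,
a subset of `N` is a `C^∀`-subset of `M` iff it is a `C^∀`-subset of `N`;
i.e. `C^∀(M | N) = C^∀(N)`. -/
def MonoidCForallFlat (C : LangClass) (M : Type) [Monoid M] : Prop :=
  ∀ (N : Submonoid M) (n k : ℕ) (π : List (Fin n) → M) (ρ : List (Fin k) → ↥N),
    FreeHomOnto M π → FreeHomOnto (↥N) ρ →
      ∀ X : Set M, X ⊆ (N : Set M) →
        (CForall C π X ↔ CForall C ρ (Subtype.val ⁻¹' X))

/-- `M` is `C^∃`-flat as a monoid: for every finitely generated submonoid `N ≤ M`,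
a subset of `N` is a `C^∃`-subset of `M` iff it is a `C^∃`-subset of `N`;
i.e. `C^∃(M | N) = C^∃(N)`. -/
def MonoidCExistsFlat (C : LangClass) (M : Type) [Monoid M] : Prop :=
  ∀ (N : Submonoid M) (n k : ℕ) (π : List (Fin n) → M) (ρ : List (Fin k) → ↥N),
    FreeHomOnto M π → FreeHomOnto (↥N) ρ →
      ∀ X : Set M, X ⊆ (N : Set M) →
        (CExists C π X ↔ CExists C ρ (Subtype.val ⁻¹' X))
-- auxiliary lemmas, part 1
section Aux

def listProd {P : Type} [Monoid P] {k : ℕ} (g : Fin k → P) (w : List (Fin k)) : P :=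
  (w.map g).prod

lemma listProd_nil {P : Type} [Monoid P] {k : ℕ} (g : Fin k → P) : listProd g [] = 1 := rfl

lemma listProd_cons {P : Type} [Monoid P] {k : ℕ} (g : Fin k → P) (a : Fin k) (w : List (Fin k)) :
    listProd g (a :: w) = g a * listProd g w := by simp [listProd]

lemma listProd_append {P : Type} [Monoid P] {k : ℕ} (g : Fin k → P) (u v : List (Fin k)) :
    listProd g (u ++ v) = listProd g u * listProd g v := by simp [listProd]

lemma listProd_single {P : Type} [Monoid P] {k : ℕ} (g : Fin k → P) (a : Fin k) :
    listProd g [a] = g a := by simp [listProd]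

lemma empty_regular {n : ℕ} : IsRegularLang (∅ : Set (List (Fin n))) :=
  ⟨Unit, inferInstance, ⟨fun s _ => s, (), ∅⟩, by intro w; simp [DFA.mem_accepts]⟩

open Classical in
lemma allGood_regular {n : ℕ} (G : Fin n → Prop) :
    IsRegularLang {w : List (Fin n) | ∀ a ∈ w, G a} := by
  classical
  refine ⟨Bool, inferInstance, ⟨fun s i => s && decide (G i), true, {true}⟩, ?_⟩
  have key : ∀ (w : List (Fin n)) (b : Bool),
      List.foldl (fun s i => s && decide (G i)) b w = (b && decide (∀ a ∈ w, G a)) := by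
    intro w
    induction w with
    | nil => intro b; simp
    | cons a w ih =>
      intro b
      simp only [List.foldl_cons, ih]
      simp [List.forall_mem_cons, Bool.and_assoc]
  intro w
  constructor
  · intro hw
    have := hw
    simp only [DFA.mem_accepts, DFA.eval, DFA.evalFrom] at this
    rw [key] at this
    simpa using this
  · intro hw
    simp only [DFA.mem_accepts, DFA.eval, DFA.evalFrom, Set.mem_singleton_iff]
    rw [key]
    simpa using hw

lemma single_word_regular : IsRegularLang ({[(0 : Fin 1)]} : Set (List (Fin 1))) := by
  refine ⟨Fin 3, inferInstance,
    ⟨fun s _ => if s = 0 then 1 else 2, 0, {1}⟩, ?_⟩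
  have hdead : ∀ w : List (Fin 1),
      List.foldl (fun (s : Fin 3) (_ : Fin 1) => if s = 0 then 1 else 2) 2 w = 2 := by
    intro w; induction w with
    | nil => rfl
    | cons a w ih => simpa using ih
  intro w
  match w with
  | [] => simp [DFA.mem_accepts, DFA.eval, DFA.evalFrom]
  | [a] =>
    have ha : a = 0 := Subsingleton.elim a 0
    subst ha
    simp [DFA.mem_accepts, DFA.eval, DFA.evalFrom]
  | a :: b :: t =>
    have ha : a = 0 := Subsingleton.elim a 0
    subst ha
    simp [DFA.mem_accepts, DFA.eval, DFA.evalFrom, hdead]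

end Aux
section Aux2

variable {C : LangClass}

lemma cexists_union {n : ℕ} {P : Type} [Monoid P] (hU : ClosedUnderUnion C)
    (φ : List (Fin n) → P) {X Y : Set P} :
    CExists C φ X → CExists C φ Y → CExists C φ (X ∪ Y) := by
  rintro ⟨L1, h1, rfl⟩ ⟨L2, h2, rfl⟩
  exact ⟨L1 ∪ L2, hU n L1 h1 L2 h2, Set.image_union φ L1 L2⟩

lemma empty_transport (hH : ClosedUnderHom C) {n m : ℕ}
    (h : (∅ : Set (List (Fin n))) ∈ C n) : (∅ : Set (List (Fin m))) ∈ C m := by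
  have := hH n m (fun _ => []) ∅ h
  simpa using this

lemma singleton_mem (hC : IsFullSemiAFL C)
    (hne : ∃ (n : ℕ) (L : Set (List (Fin n))), L ∈ C n ∧ L.Nonempty) :
    ∀ (m : ℕ) (w : List (Fin m)), ({w} : Set (List (Fin m))) ∈ C m := by
  obtain ⟨n, L, hL, u, hu⟩ := hne
  obtain ⟨⟨hH, hI, hR⟩, _⟩ := hC
  intro m w
  have h1 : {v : List (Fin 1) | v.flatMap (fun _ => u) ∈ L} ∈ C 1 :=
    hI 1 n (fun _ => u) L hL
  have h2 : ({v : List (Fin 1) | v.flatMap (fun _ => u) ∈ L} ∩ {[(0 : Fin 1)]}) ∈ C 1 :=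
    hR 1 _ h1 _ single_word_regular
  have heq : {v : List (Fin 1) | v.flatMap (fun _ => u) ∈ L} ∩ {[(0 : Fin 1)]}
      = ({[(0 : Fin 1)]} : Set (List (Fin 1))) := by
    apply Set.inter_eq_right.mpr
    intro v hv
    rcases hv with rfl
    simpa using hu
  rw [heq] at h2
  have h3 := hH 1 m (fun _ => w) _ h2
  have h4 : (fun v : List (Fin 1) => v.flatMap (fun _ => w)) '' {[(0 : Fin 1)]}
      = ({w} : Set (List (Fin m))) := by
    simp
  rwa [h4] at h3

lemma empty_mem (hC : IsFullSemiAFL C)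
    (hne : ∃ (n : ℕ) (L : Set (List (Fin n))), L ∈ C n ∧ L.Nonempty) (m : ℕ) :
    (∅ : Set (List (Fin m))) ∈ C m := by
  obtain ⟨n, L, hL, _⟩ := hne
  have h : L ∩ ∅ ∈ C n := hC.1.2.2 n L hL ∅ empty_regular
  rw [Set.inter_empty] at h
  exact empty_transport hC.1.1 h

lemma finite_cexists (hC : IsFullSemiAFL C)
    (hne : ∃ (n : ℕ) (L : Set (List (Fin n))), L ∈ C n ∧ L.Nonempty)
    {k : ℕ} {P : Type} [Monoid P]
    (φ : List (Fin k) → P) (hs : Function.Surjective φ)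
    {F : Set P} (hF : F.Finite) : CExists C φ F := by
  refine Set.Finite.induction_on (motive := fun F _ => CExists C φ F) F hF ⟨∅, empty_mem hC hne k, Set.image_empty φ⟩ ?_
  intro x F _ _ ih
  obtain ⟨w, hw⟩ := hs x
  rw [Set.insert_eq]
  refine cexists_union hC.2 φ ⟨{w}, singleton_mem hC hne k w, ?_⟩ ih
  simp [hw]

lemma cexists_comp_bij {k : ℕ} {P Q : Type} [Monoid P] [Monoid Q]
    (ε : P → Q) (hb : Function.Bijective ε) (ψ : List (Fin k) → P) (Z : Set Q) :
    CExists C (fun w => ε (ψ w)) Z ↔ CExists C ψ (ε ⁻¹' Z) := by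
  constructor
  · rintro ⟨L, hL, h⟩
    refine ⟨L, hL, ?_⟩
    have h2 : ε '' (ψ '' L) = Z := by
      rw [← Set.image_comp]; exact h
    rw [← h2, Set.preimage_image_eq _ hb.injective]
  · rintro ⟨L, hL, h⟩
    refine ⟨L, hL, ?_⟩
    have h2 : (fun w => ε (ψ w)) '' L = ε '' (ψ '' L) := Set.image_comp ε ψ L
    rw [h2, h, Set.image_preimage_eq Z hb.surjective]

end Aux2
section Aux3

variable {C : LangClass}

open Classical in
/-- The key transfer lemma between a presentation `φ` of `P` and a letter-wise
presentation `ψ` of a "submonoid" `Q` embedded in `P` via `j`. -/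
lemma transfer {n : ℕ} {P Q : Type} [Monoid P] [Monoid Q] (hC : IsFullSemiAFL C)
    (φ : List (Fin n) → P) (ψ : List (Fin n) → Q) (j : Q → P)
    (hj : Function.Injective j)
    (hψnil : ψ [] = 1) (hψapp : ∀ u v, ψ (u ++ v) = ψ u * ψ v)
    (G : Fin n → Prop)
    (hgood : ∀ w, (∀ a ∈ w, G a) → j (ψ w) = φ w)
    (hall : ∀ w, φ w ∈ Set.range j → ∀ a ∈ w, G a)
    (hbad : ∀ a, ¬ G a → ψ [a] = 1)
    (X : Set P) (hX : X ⊆ Set.range j) :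
    CExists C φ X ↔ CExists C ψ (j ⁻¹' X) := by
  classical
  obtain ⟨⟨hH, hI, hR⟩, _⟩ := hC
  constructor
  · rintro ⟨L, hL, rfl⟩
    refine ⟨L ∩ {w | ∀ a ∈ w, G a}, hR n L hL _ (allGood_regular G), ?_⟩
    ext q
    constructor
    · rintro ⟨w, ⟨hwL, hwG⟩, rfl⟩
      show j (ψ w) ∈ φ '' L
      rw [hgood w hwG]
      exact ⟨w, hwL, rfl⟩
    · intro hq
      obtain ⟨w, hwL, hw⟩ := hq
      have hG : ∀ a ∈ w, G a := hall w (by rw [hw]; exact Set.mem_range_self q)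
      exact ⟨w, ⟨hwL, hG⟩, hj (by rw [hgood w hG, hw])⟩
  · rintro ⟨L, hL, himg⟩
    set f : Fin n → List (Fin n) := fun a => if G a then [a] else [] with hf
    have hfgood : ∀ w : List (Fin n), ∀ a ∈ w.flatMap f, G a := by
      intro w
      induction w with
      | nil => simp
      | cons a w ih =>
        intro b hb
        rw [List.flatMap_cons] at hb
        rcases List.mem_append.mp hb with h1 | h2
        · by_cases hGa : G a
          · simp [hf, hGa] at h1
            subst h1; exact hGa
          · simp [hf, hGa] at h1
        · exact ih b h2
    have hfψ : ∀ w : List (Fin n), ψ (w.flatMap f) = ψ w := by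
      intro w
      induction w with
      | nil => simp
      | cons a w ih =>
        rw [List.flatMap_cons, hψapp]
        have ha : ψ (a :: w) = ψ [a] * ψ w := by
          rw [show a :: w = [a] ++ w from rfl, hψapp]
        by_cases hGa : G a
        · simp only [hf, if_pos hGa]
          rw [ih, ha]
        · simp only [hf, if_neg hGa]
          rw [hψnil, one_mul, ih, ha, hbad a hGa, one_mul]
    refine ⟨(fun w : List (Fin n) => w.flatMap f) '' L, hH n n f L hL, ?_⟩
    have hcomp : φ '' ((fun w : List (Fin n) => w.flatMap f) '' L)
        = (fun w => j (ψ w)) '' L := by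
      rw [← Set.image_comp]
      apply Set.image_congr
      intro w _
      show φ (w.flatMap f) = j (ψ w)
      rw [← hgood _ (hfgood w), hfψ w]
    rw [hcomp]
    have : (fun w => j (ψ w)) '' L = j '' (ψ '' L) := Set.image_comp j ψ L
    rw [this, himg, Set.image_preimage_eq_of_subset hX]

/-- Splitting off the part of a `C^∃`-set lying in the "good" region. -/
lemma cexists_inter_good {n : ℕ} {P : Type} [Monoid P] (hC : IsFullSemiAFL C)
    (φ : List (Fin n) → P) (G : Fin n → Prop) (S : Set P)
    (hiff : ∀ w, φ w ∈ S ↔ ∀ a ∈ w, G a) {X : Set P} :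
    CExists C φ X → CExists C φ (X ∩ S) := by
  rintro ⟨L, hL, rfl⟩
  refine ⟨L ∩ {w | ∀ a ∈ w, G a}, hC.1.2.2 n L hL _ (allGood_regular G), ?_⟩
  ext x
  constructor
  · rintro ⟨w, ⟨hwL, hwG⟩, rfl⟩
    exact ⟨⟨w, hwL, rfl⟩, (hiff w).mpr hwG⟩
  · rintro ⟨⟨w, hwL, rfl⟩, hS⟩
    exact ⟨w, ⟨hwL, (hiff w).mp hS⟩, rfl⟩

/-- If the complement of `N₀` is an ideal, all letters of a word representing an
element of `N₀` represent elements of `N₀`. -/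
lemma ideal_letters {k : ℕ} {P M₀ : Type} [Monoid P] [Monoid M₀] (N₀ : Submonoid M₀)
    (hIdeal : ∀ a b : M₀, ∀ x ∈ ((N₀ : Set M₀))ᶜ, a * x * b ∈ ((N₀ : Set M₀))ᶜ)
    (φ : List (Fin k) → P) (happ : ∀ u v, φ (u ++ v) = φ u * φ v)
    (θ : P → M₀) (hθ : ∀ x y : P, θ (x * y) = θ x * θ y) :
    ∀ w, θ (φ w) ∈ N₀ → ∀ a ∈ w, θ (φ [a]) ∈ N₀ := by
  intro w
  induction w with
  | nil => simp
  | cons a w ih =>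
    intro hw b hb
    have h1 : φ (a :: w) = φ [a] * φ w := by
      rw [show a :: w = [a] ++ w from rfl, happ]
    rw [h1, hθ] at hw
    have ha : θ (φ [a]) ∈ N₀ := by
      by_contra h
      have h2 := hIdeal 1 (θ (φ w)) (θ (φ [a])) h
      rw [one_mul] at h2
      exact h2 hw
    have hw' : θ (φ w) ∈ N₀ := by
      by_contra h
      have h2 := hIdeal (θ (φ [a])) 1 (θ (φ w)) h
      rw [mul_one] at h2
      exact h2 hw
    rcases List.mem_cons.mp hb with rfl | hb'
    · exact ha
    · exact ih hw' b hb'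

lemma listProd_good {k : ℕ} {P Q : Type} [Monoid P] [Monoid Q]
    (φ : List (Fin k) → P)
    (hnil : φ [] = 1) (happ : ∀ u v, φ (u ++ v) = φ u * φ v)
    (j : Q → P) (hj1 : j 1 = 1) (hjm : ∀ x y : Q, j (x * y) = j x * j y)
    (g : Fin k → Q) (G : Fin k → Prop) (hg : ∀ a, G a → j (g a) = φ [a]) :
    ∀ w, (∀ a ∈ w, G a) → j (listProd g w) = φ w := by
  intro w
  induction w with
  | nil => intro _; rw [listProd_nil, hj1, hnil]
  | cons a w ih =>
    intro hG
    rw [listProd_cons, hjm, hg a (hG a List.mem_cons_self),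
      ih (fun b hb => hG b (List.mem_cons_of_mem a hb)),
      show a :: w = [a] ++ w from rfl, happ]

lemma listProd_surjective {k : ℕ} {P Q : Type} [Monoid P] [Monoid Q]
    (φ : List (Fin k) → P) (g : Fin k → Q) (j : Q → P)
    (hjinj : Function.Injective j)
    (hφs : Function.Surjective φ)
    (G : Fin k → Prop)
    (hgood : ∀ w, (∀ a ∈ w, G a) → j (listProd g w) = φ w)
    (hall : ∀ w, φ w ∈ Set.range j → ∀ a ∈ w, G a) :
    Function.Surjective (fun w : List (Fin k) => listProd g w) := by
  intro q
  obtain ⟨w, hw⟩ := hφs (j q)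
  have hG := hall w (by rw [hw]; exact Set.mem_range_self q)
  exact ⟨w, hjinj (by rw [hgood w hG, hw])⟩

end Aux3
section Main

/-- Easy direction: flatness of `M` descends to `N`. -/
lemma easy_dir (C : LangClass) {M₁ : Type} [Monoid M₁]
    (hMfg : ∃ (n : ℕ) (π : List (Fin n) → M₁), FreeHomOnto M₁ π)
    (N : Submonoid M₁) (hM : MonoidCExistsFlat C M₁) :
    MonoidCExistsFlat C ↥N := by
  intro N'' n k π₁ ρ₁ hπ₁ hρ₁ Y hY
  obtain ⟨n₀, π₀, hπ₀⟩ := hMfg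
  set T := N''.map N.subtype with hT
  have hmemT : ∀ y : ↥N'', (↑(↑y : ↥N) : M₁) ∈ T := by
    intro y
    exact ⟨↑y, y.2, rfl⟩
  set ε : ↥N'' → ↥T := fun y => ⟨(↑(↑y : ↥N) : M₁), hmemT y⟩ with hε
  have hεinj : Function.Injective ε := by
    intro x y hxy
    have h1 := congrArg Subtype.val hxy
    simp only [hε] at h1
    exact Subtype.val_injective (Subtype.val_injective h1)
  have hεsurj : Function.Surjective ε := by
    intro t
    obtain ⟨y, hy, hval⟩ := t.2
    exact ⟨⟨y, hy⟩, Subtype.ext hval⟩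
  set ρ₂ : List (Fin k) → ↥T := fun w => ε (ρ₁ w) with hρ₂
  have hρ₂onto : FreeHomOnto (↥T) ρ₂ := by
    constructor
    · apply Subtype.ext
      show (↑(↑(ρ₁ []) : ↥N) : M₁) = 1
      rw [hρ₁.map_nil]
      simp
    · intro u v
      apply Subtype.ext
      show (↑(↑(ρ₁ (u ++ v)) : ↥N) : M₁) = ↑(ε (ρ₁ u) * ε (ρ₁ v))
      rw [hρ₁.map_append]
      simp
      rfl
    · exact hεsurj.comp hρ₁.surjective
  set X : Set M₁ := Subtype.val '' Y with hX
  have hXN : X ⊆ (N : Set M₁) := by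
    rintro x ⟨y, _, rfl⟩; exact y.2
  have hXT : X ⊆ (T : Set M₁) := by
    rintro x ⟨y, hy, rfl⟩; exact ⟨y, hY hy, rfl⟩
  have h1 := hM N n₀ n π₀ π₁ hπ₀ hπ₁ X hXN
  have h2 := hM T n₀ k π₀ ρ₂ hπ₀ hρ₂onto X hXT
  have hYeq : (Subtype.val ⁻¹' X : Set ↥N) = Y :=
    Set.preimage_image_eq Y Subtype.val_injective
  have h3 := cexists_comp_bij (C := C) ε ⟨hεinj, hεsurj⟩ ρ₁ (Subtype.val ⁻¹' X)
  have h4 : (ε ⁻¹' (Subtype.val ⁻¹' X) : Set ↥N'') = Subtype.val ⁻¹' Y := by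
    ext y
    show (↑(↑y : ↥N) : M₁) ∈ X ↔ (↑y : ↥N) ∈ Y
    constructor
    · intro hy
      obtain ⟨z, hz, hzy⟩ := hy
      rwa [Subtype.val_injective hzy] at hz
    · intro hy
      exact ⟨↑y, hy, rfl⟩
  rw [hYeq] at h1
  rw [← h1, h2]
  rw [h4] at h3
  exact h3

/-- Hard direction: flatness of `N` lifts to `M`. -/
lemma hard_dir (C : LangClass) (hC : IsFullSemiAFL C) {M₁ : Type} [Monoid M₁]
    (N : Submonoid M₁)
    (hIdeal : ∀ a b : M₁, ∀ x ∈ ((N : Set M₁))ᶜ, a * x * b ∈ ((N : Set M₁))ᶜ)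
    (hFin : (((N : Set M₁))ᶜ).Finite)
    (hN : MonoidCExistsFlat C ↥N) : MonoidCExistsFlat C M₁ := by
  classical
  intro T n k π ρ hπ hρ X hXT
  -- the presentation of `N` induced by `π`
  set Gπ : Fin n → Prop := fun i => π [i] ∈ N with hGπ
  set gτ : Fin n → ↥N := fun i => if h : π [i] ∈ N then ⟨π [i], h⟩ else 1 with hgτ
  set τ : List (Fin n) → ↥N := fun w => listProd gτ w with hτ
  have hτnil : τ [] = 1 := rfl
  have hτapp : ∀ u v, τ (u ++ v) = τ u * τ v := fun u v => listProd_append gτ u v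
  have hgoodτ : ∀ w, (∀ a ∈ w, Gπ a) → (↑(τ w) : M₁) = π w :=
    listProd_good π hπ.map_nil hπ.map_append Subtype.val rfl (fun x y => Submonoid.coe_mul N x y) gτ Gπ
      (fun a ha => by simp [hgτ, dif_pos (show π [a] ∈ N from ha)])
  have hallτ : ∀ w, π w ∈ N → ∀ a ∈ w, Gπ a := by
    intro w hw a ha
    exact ideal_letters N hIdeal π hπ.map_append id (fun _ _ => rfl) w hw a ha
  have hbadτ : ∀ a, ¬ Gπ a → τ [a] = 1 := by
    intro a ha
    show listProd gτ [a] = 1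
    rw [listProd_single, hgτ]
    exact dif_neg ha
  have hτs : Function.Surjective τ :=
    listProd_surjective π gτ Subtype.val Subtype.val_injective hπ.surjective Gπ hgoodτ
      (fun w hw => hallτ w (by obtain ⟨x, hx⟩ := hw; rw [← hx]; exact x.2))
  have hτonto : FreeHomOnto (↥N) τ := ⟨hτnil, hτapp, hτs⟩
  -- the intersection `T ∩ N` as a submonoid of `N`
  set N' : Submonoid ↥N :=
    { carrier := {x : ↥N | (x : M₁) ∈ T}
      one_mem' := by
        simp only [Set.mem_setOf_eq, OneMemClass.coe_one]
        exact T.one_mem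
      mul_mem' := by
        intro a b ha hb
        simp only [Set.mem_setOf_eq, Submonoid.coe_mul]
        exact T.mul_mem ha hb } with hN'
  set ι : ↥N' → ↥T := fun x => ⟨(↑(↑x : ↥N) : M₁), x.2⟩ with hι
  have hιinj : Function.Injective ι := by
    intro x y hxy
    have h1 := congrArg Subtype.val hxy
    simp only [hι] at h1
    exact Subtype.val_injective (Subtype.val_injective h1)
  have hι1 : ι 1 = 1 := by
    apply Subtype.ext
    show ((1 : ↥N') : ↥N) = (1 : M₁)
    simp
  have hιm : ∀ x y : ↥N', ι (x * y) = ι x * ι y := by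
    intro x y
    apply Subtype.ext
    show ((↑(x * y) : ↥N) : M₁) = ↑(ι x * ι y)
    simp [hι]
  have hιrange : Set.range ι = {t : ↥T | (↑t : M₁) ∈ N} := by
    ext t
    constructor
    · rintro ⟨x, rfl⟩
      exact (↑x : ↥N).2
    · intro ht
      exact ⟨⟨⟨↑t, ht⟩, t.2⟩, rfl⟩
  -- presentation of `N'` induced by `ρ`
  set Gρ : Fin k → Prop := fun i => ((ρ [i] : ↥T) : M₁) ∈ N with hGρ
  set gσ : Fin k → ↥N' := fun i =>
    if h : ((ρ [i] : ↥T) : M₁) ∈ N then ⟨⟨↑(ρ [i]), h⟩, (ρ [i]).2⟩ else 1 with hgσ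
  set σ : List (Fin k) → ↥N' := fun w => listProd gσ w with hσ
  have hgoodσ : ∀ w, (∀ a ∈ w, Gρ a) → ι (σ w) = ρ w :=
    listProd_good ρ hρ.map_nil hρ.map_append ι hι1 hιm gσ Gρ
      (fun a ha => by
        apply Subtype.ext
        simp [hgσ, dif_pos (show ((ρ [a] : ↥T) : M₁) ∈ N from ha), hι])
  have hallσ : ∀ w, ((ρ w : ↥T) : M₁) ∈ N → ∀ a ∈ w, Gρ a := by
    intro w hw a ha
    exact ideal_letters N hIdeal ρ hρ.map_append (fun t => (t : M₁)) (fun _ _ => rfl) w hw a ha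
  have hbadσ : ∀ a, ¬ Gρ a → σ [a] = 1 := by
    intro a ha
    show listProd gσ [a] = 1
    rw [listProd_single, hgσ]
    exact dif_neg ha
  have hσs : Function.Surjective σ :=
    listProd_surjective ρ gσ ι hιinj hρ.surjective Gρ hgoodσ
      (fun w hw => hallσ w (by obtain ⟨x, hx⟩ := hw; rw [← hx]; exact (↑x : ↥N).2))
  have hσonto : FreeHomOnto (↥N') σ := ⟨rfl, fun u v => listProd_append gσ u v, hσs⟩
  -- the transfer instances
  have T1 : ∀ X' : Set M₁, X' ⊆ (N : Set M₁) →
      (CExists C π X' ↔ CExists C τ (Subtype.val ⁻¹' X')) := by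
    intro X' hX'
    apply transfer hC π τ Subtype.val Subtype.val_injective hτnil hτapp Gπ hgoodτ ?_ hbadτ X' ?_
    · intro w hw
      exact hallτ w (by obtain ⟨x, hx⟩ := hw; rw [← hx]; exact x.2)
    · intro x hx
      exact ⟨⟨x, hX' hx⟩, rfl⟩
  have T2 : ∀ Z : Set ↥T, (∀ t ∈ Z, ((t : ↥T) : M₁) ∈ N) →
      (CExists C ρ Z ↔ CExists C σ (ι ⁻¹' Z)) := by
    intro Z hZ
    apply transfer hC ρ σ ι hιinj rfl (fun u v => listProd_append gσ u v) Gρ hgoodσ ?_ hbadσ Z ?_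
    · intro w hw
      rw [hιrange] at hw
      exact hallσ w hw
    · intro t ht
      rw [hιrange]
      exact hZ t ht
  -- flatness of `N` for the submonoid `N'`
  have hflat := hN N' n k τ σ hτonto hσonto
  -- the main chain for the part of `X` inside `N`
  have hsubY : (Subtype.val ⁻¹' (X ∩ ↑N) : Set ↥N) ⊆ (N' : Set ↥N) := by
    intro y hy
    exact hXT hy.1
  have hZgood : ∀ t : ↥T, t ∈ (Subtype.val ⁻¹' (X ∩ ↑N) : Set ↥T) → ((t : ↥T) : M₁) ∈ N :=
    fun t ht => ht.2
  have hseteq : (Subtype.val ⁻¹' (Subtype.val ⁻¹' (X ∩ ↑N) : Set ↥N) : Set ↥N')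
      = ι ⁻¹' (Subtype.val ⁻¹' (X ∩ ↑N) : Set ↥T) := rfl
  have hmain : CExists C π (X ∩ ↑N) ↔ CExists C ρ (Subtype.val ⁻¹' (X ∩ ↑N)) := by
    rw [T1 (X ∩ ↑N) Set.inter_subset_right,
      hflat (Subtype.val ⁻¹' (X ∩ ↑N)) hsubY,
      T2 (Subtype.val ⁻¹' (X ∩ ↑N)) hZgood, ← hseteq]
  constructor
  · rintro ⟨L, hL, himg⟩
    by_cases hLne : L.Nonempty
    · have hnd : ∃ (m : ℕ) (L' : Set (List (Fin m))), L' ∈ C m ∧ L'.Nonempty :=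
        ⟨n, L, hL, hLne⟩
      have h1 : CExists C π (X ∩ ↑N) := by
        apply cexists_inter_good hC π Gπ ↑N ?_ ⟨L, hL, himg⟩
        intro w
        constructor
        · exact hallτ w
        · intro hw
          rw [← hgoodτ w hw]
          exact (τ w).2
      have h2 := hmain.mp h1
      have hfin : (Subtype.val ⁻¹' (X ∩ (↑N)ᶜ) : Set ↥T).Finite :=
        (hFin.subset Set.inter_subset_right).preimage Subtype.val_injective.injOn
      have h3 : CExists C ρ (Subtype.val ⁻¹' (X ∩ (↑N)ᶜ)) :=
        finite_cexists hC hnd ρ hρ.surjective hfin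
      have h4 := cexists_union hC.2 ρ h2 h3
      rwa [← Set.preimage_union, Set.inter_union_compl] at h4
    · rw [Set.not_nonempty_iff_eq_empty] at hLne
      subst hLne
      have hXe : X = ∅ := by rw [← himg, Set.image_empty]
      subst hXe
      exact ⟨∅, empty_transport hC.1.1 hL, by simp⟩
  · rintro ⟨L, hL, himg⟩
    by_cases hLne : L.Nonempty
    · have hnd : ∃ (m : ℕ) (L' : Set (List (Fin m))), L' ∈ C m ∧ L'.Nonempty :=
        ⟨k, L, hL, hLne⟩
      have h1 : CExists C ρ ((Subtype.val ⁻¹' X) ∩ {t : ↥T | (↑t : M₁) ∈ N}) := by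
        apply cexists_inter_good hC ρ Gρ _ ?_ ⟨L, hL, himg⟩
        intro w
        constructor
        · exact hallσ w
        · intro hw
          rw [← hgoodσ w hw]
          exact (↑(σ w) : ↥N).2
      have heq1 : (Subtype.val ⁻¹' X) ∩ {t : ↥T | (↑t : M₁) ∈ N}
          = (Subtype.val ⁻¹' (X ∩ ↑N) : Set ↥T) := by
        ext t
        simp [Set.mem_preimage, Set.mem_inter_iff]
      rw [heq1] at h1
      have h2 := hmain.mpr h1
      have h3 : CExists C π (X ∩ (↑N)ᶜ) :=
        finite_cexists hC hnd π hπ.surjective (hFin.subset Set.inter_subset_right)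
      have h4 := cexists_union hC.2 π h2 h3
      rwa [Set.inter_union_compl] at h4
    · rw [Set.not_nonempty_iff_eq_empty] at hLne
      subst hLne
      have hZe : (Subtype.val ⁻¹' X : Set ↥T) = ∅ := by rw [← himg, Set.image_empty]
      have hXe : X = ∅ := by
        ext x
        simp only [Set.mem_empty_iff_false, iff_false]
        intro hx
        have hmem : (⟨x, hXT hx⟩ : ↥T) ∈ (Subtype.val ⁻¹' X : Set ↥T) := hx
        rw [hZe] at hmem
        exact hmem
      rw [hXe]
      exact ⟨∅, empty_transport hC.1.1 hL, by simp⟩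

end Main
/-- Let `C` be a full semi-AFL, `M` a finitely generated monoid and
`N ≤ M` a submonoid such that `M \ N` is a finite ideal of `M`.  Then `M` is
`C^∃`-flat as a monoid iff `N` is `C^∃`-flat as a monoid. -/
theorem stmt14 (C : LangClass) (hC : IsFullSemiAFL C)
    {M : Type} [Monoid M]
    (hMfg : ∃ (n : ℕ) (π : List (Fin n) → M), FreeHomOnto M π)
    (N : Submonoid M)
    (hIdeal : ∀ a b : M, ∀ x ∈ ((N : Set M))ᶜ, a * x * b ∈ ((N : Set M))ᶜ)
    (hFin : (((N : Set M))ᶜ).Finite) :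
    MonoidCExistsFlat C M ↔ MonoidCExistsFlat C ↥N := by
  exact ⟨easy_dir C hMfg N, hard_dir C hC N hIdeal hFin⟩
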